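/- Let G be a finite group, x ∈ G, and n ≥ 2. Suppose that every left-normed simple commutator of weight n with entries in nil_G(x) is trivial, i.e., [l₁, l₂, …, lₙ] = 1 for all l₁, …, lₙ ∈ nil_G(x), where [a₁] = a₁ and [a₁, …, aₖ] = [[a₁, …, a_{k−1}], aₖ]. Then nil_G(x) is (the underlying set of) a subgroup of G; moreover, this subgroup is nilpotent of nilpotency class at most n − 1 and is a maximal nilpotent subgroup of G (maximal among nilpotent subgroups of G with respect to inclusion). -/

import Mathlib

/-- The nilpotentizer of `x` in `G`: the set of `y` such that `⟨x, y⟩` is nilpotent. -/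
def nilpotentizer {G : Type*} [Group G] (x : G) : Set G :=
  {y | Group.IsNilpotent (Subgroup.closure ({x, y} : Set G))}

/-- The left-normed simple commutator `[a₁, …, a_{n+1}]` of weight `n + 1`,
where `[a] = a` and `[a₁, …, aₖ] = [[a₁, …, a_{k-1}], aₖ]` with
`[a, b] = a⁻¹ * b⁻¹ * a * b`. -/
def leftNormedCommutator {G : Type*} [Group G] : ∀ n : ℕ, (Fin (n + 1) → G) → G
  | 0, f => f 0
  | n + 1, f =>
      (leftNormedCommutator n (f ∘ Fin.castSucc))⁻¹ * (f (Fin.last (n + 1)))⁻¹ *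
        leftNormedCommutator n (f ∘ Fin.castSucc) * f (Fin.last (n + 1))

lemma map_leftNormedCommutator {G H : Type*} [Group G] [Group H] (φ : G →* H) :
    ∀ (n : ℕ) (f : Fin (n + 1) → G),
      φ (leftNormedCommutator n f) = leftNormedCommutator n (φ ∘ f)
  | 0, f => rfl
  | n + 1, f => by
    have := map_leftNormedCommutator φ n (f ∘ Fin.castSucc)
    simp only [leftNormedCommutator, map_mul, map_inv, this]
    rfl

/-- The set of left-normed commutators of weight `k + 1` with entries in `S`. -/
def lncSet {G : Type*} [Group G] (S : Set G) (k : ℕ) : Set G :=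
  {g | ∃ f : Fin (k + 1) → G, (∀ i, f i ∈ S) ∧ leftNormedCommutator k f = g}

open scoped commutatorElement in
lemma key_lemma {G : Type*} [Group G] (S : Set G) (hS : Subgroup.closure S = ⊤) (m : ℕ)
    (h : ∀ f : Fin (m + 1) → G, (∀ i, f i ∈ S) → leftNormedCommutator m f = 1) :
    lowerCentralSeries (⊤ : Subgroup G) m = ⊥ := by
  set N : ℕ → Subgroup G := fun k => Subgroup.normalClosure (lncSet S k) with hN
  -- Step B : ⁅N k, ⊤⁆ ≤ N (k+1)
  have stepB : ∀ k : ℕ, ⁅N k, (⊤ : Subgroup G)⁆ ≤ N (k + 1) := by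
    intro k
    set M := N (k + 1) with hM
    haveI : M.Normal := Subgroup.normalClosure_normal
    set π := QuotientGroup.mk' M with hπ
    -- commutators of weight k+1 with entries in S map to central elements of G ⧸ M
    have hcent : ∀ g ∈ lncSet S k, π g ∈ Subgroup.center (G ⧸ M) := by
      rintro g ⟨f, hf, rfl⟩
      -- first : π (lnc f) commutes with π s for s ∈ S
      have hcomm : ∀ y : G, Commute (π (leftNormedCommutator k f)) (π y) := by
        intro y
        have hsub : Subgroup.closure S ≤
            (Subgroup.centralizer {π (leftNormedCommutator k f)}).comap π := by
          rw [Subgroup.closure_le]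
          intro s hs
          simp only [SetLike.mem_coe, Subgroup.mem_comap, Subgroup.mem_centralizer_iff,
            Set.mem_singleton_iff, forall_eq]
          have hmem : leftNormedCommutator (k + 1) (Fin.snoc f s) ∈ M := by
            apply Subgroup.subset_normalClosure
            exact ⟨Fin.snoc f s, by
              intro i
              induction i using Fin.lastCases with
              | last => simpa [Fin.snoc_last] using hs
              | cast i => simpa [Fin.snoc_castSucc] using hf i, rfl⟩
          have h1 : π (leftNormedCommutator (k + 1) (Fin.snoc f s)) = 1 :=
            (QuotientGroup.eq_one_iff _).mpr hmem
          have h2 : leftNormedCommutator (k + 1) (Fin.snoc f s) =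
              ⁅(leftNormedCommutator k f)⁻¹, s⁻¹⁆ := by
            simp only [leftNormedCommutator, Fin.snoc_comp_castSucc, Fin.snoc_last,
              commutatorElement_def, inv_inv]
          rw [h2] at h1
          have := commutatorElement_eq_one_iff_commute.mp (by
            simpa only [map_commutatorElement, map_inv] using h1)
          have hc : Commute (π (leftNormedCommutator k f)) (π s) := by
            simpa using this.inv_inv
          exact hc.eq
        have : ∀ y : G, y ∈ (Subgroup.centralizer {π (leftNormedCommutator k f)}).comap π :=
          fun y => (hS ▸ hsub) (Subgroup.mem_top y)
        have hy := this y
        simp only [Subgroup.mem_comap, Subgroup.mem_centralizer_iff, Set.mem_singleton_iff,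
          forall_eq] at hy
        exact hy
      rw [Subgroup.mem_center_iff]
      intro q
      induction q using QuotientGroup.induction_on with
      | H y => exact (hcomm y).symm.eq
    have hNkD : N k ≤ (Subgroup.center (G ⧸ M)).comap π :=
      Subgroup.normalClosure_le_normal hcent
    rw [Subgroup.commutator_le]
    intro a ha g _
    have hac : π a ∈ Subgroup.center (G ⧸ M) := hNkD ha
    have : π ⁅a, g⁆ = 1 := by
      rw [map_commutatorElement, commutatorElement_eq_one_iff_commute]
      exact (Subgroup.mem_center_iff.mp hac (π g)).symm
    exact (QuotientGroup.eq_one_iff _).mp this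
  -- Step A : lowerCentralSeries G k ≤ N k
  have stepA : ∀ k : ℕ, lowerCentralSeries (⊤ : Subgroup G) k ≤ N k := by
    intro k
    induction k with
    | zero =>
      have : Subgroup.closure S ≤ N 0 := by
        rw [Subgroup.closure_le]
        intro s hs
        exact Subgroup.subset_normalClosure ⟨fun _ => s, fun _ => hs, rfl⟩
      intro g _
      exact (hS ▸ this) (Subgroup.mem_top g)
    | succ k ih =>
      calc lowerCentralSeries (⊤ : Subgroup G) (k + 1) = ⁅lowerCentralSeries (⊤ : Subgroup G) k, ⊤⁆ :=
            Subgroup.lowerCentralSeries_succ _ k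
        _ ≤ ⁅N k, ⊤⁆ := Subgroup.commutator_mono ih le_rfl
        _ ≤ N (k + 1) := stepB k
  -- conclude
  have hNm : N m = ⊥ := by
    rw [eq_bot_iff]
    apply Subgroup.normalClosure_le_normal
    rintro g ⟨f, hf, rfl⟩
    rw [SetLike.mem_coe, Subgroup.mem_bot]
    exact h f hf
  exact le_bot_iff.mp (hNm ▸ stepA m)

lemma isNilpotent_of_le {G : Type*} [Group G] {H K : Subgroup G} (hle : K ≤ H)
    (hH : Group.IsNilpotent H) : Group.IsNilpotent K := by
  haveI := hH
  haveI : Group.IsNilpotent (K.subgroupOf H) := Subgroup.isNilpotent _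
  exact nilpotent_of_surjective (Subgroup.subgroupOfEquivOfLe hle).toMonoidHom
    (Subgroup.subgroupOfEquivOfLe hle).surjective

theorem stmt_7 {G : Type*} [Group G] [Finite G] (x : G) (n : ℕ) (hn : 2 ≤ n)
    (h : ∀ f : Fin (n - 1 + 1) → G, (∀ i, f i ∈ nilpotentizer x) →
      leftNormedCommutator (n - 1) f = 1) :
    ∃ H : Subgroup G, (H : Set G) = nilpotentizer x ∧
      ∃ hN : Group.IsNilpotent H, Group.nilpotencyClass H ≤ n - 1 ∧
        ∀ K : Subgroup G, Group.IsNilpotent K → H ≤ K → H = K := by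
  set 𝒩 := nilpotentizer x with h𝒩
  have hx : x ∈ 𝒩 := by
    show Group.IsNilpotent (Subgroup.closure ({x, x} : Set G))
    rw [Set.pair_eq_singleton, ← Subgroup.zpowers_eq_closure]
    exact nilpotent_iff_lowerCentralSeries.mpr ⟨1, Subgroup.lowerCentralSeries_one_eq_bot_iff.mpr inferInstance⟩
  set H : Subgroup G := Subgroup.closure 𝒩 with hH
  -- transferred hypothesis inside H
  have hγ : lowerCentralSeries (⊤ : Subgroup H) (n - 1) = ⊥ := by
    apply key_lemma (((↑) : H → G) ⁻¹' 𝒩) Subgroup.closure_closure_coe_preimage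
    intro f hf
    have : H.subtype (leftNormedCommutator (n - 1) f) = 1 := by
      rw [map_leftNormedCommutator]
      exact h _ fun i => hf i
    exact Subgroup.subtype_injective H (by simpa using this)
  have hNil : Group.IsNilpotent H := nilpotent_iff_lowerCentralSeries.mpr ⟨_, hγ⟩
  have hclass : Group.nilpotencyClass H ≤ n - 1 :=
    lowerCentralSeries_eq_bot_iff_nilpotencyClass_le.mp hγ
  -- every element of a nilpotent subgroup containing x lies in 𝒩
  have hsub : ∀ K : Subgroup G, Group.IsNilpotent K → x ∈ K → ∀ y ∈ K, y ∈ 𝒩 := by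
    intro K hK hxK y hyK
    have hle : Subgroup.closure ({x, y} : Set G) ≤ K := by
      rw [Subgroup.closure_le]
      rintro z (rfl | rfl)
      · exact hxK
      · exact hyK
    exact isNilpotent_of_le hle hK
  have hxH : x ∈ H := Subgroup.subset_closure hx
  have hHset : (H : Set G) = 𝒩 := by
    apply Set.Subset.antisymm
    · intro y hy
      exact hsub H hNil hxH y hy
    · exact Subgroup.subset_closure
  refine ⟨H, hHset, hNil, hclass, ?_⟩
  intro K hK hHK
  refine le_antisymm hHK fun y hy => ?_
  have : y ∈ 𝒩 := hsub K hK (hHK hxH) y hy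
  exact Subgroup.subset_closure this
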